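/- Let f be a p-ordinary newform with absolutely irreducible residual representation ρ̄_f mod ℘, and suppose ρ_{f,℘}|_{G_p} is upper triangular: [[ψ₁χ^{k−1}, c],[0, ψ₂]]. If M ∈ GL_2(K) is such that M ρ_{f,℘} M^{-1} is integral, reduces to ρ̄_f, and is also upper triangular at p with the same diagonal characters, then M is a scalar multiple of [[u, v],[0, 1]] with u ≡ 1 mod ℘ and v ≡ 0 mod ℘; consequently the associated extension class mod ℘^n is multiplied by the unit u, and in particular whether ρ_{f,℘} mod ℘^n is split at p is independent of the choice of lattice. -/

import Mathlib

open IsLocalRing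

noncomputable section

/-- The residual representation attached to `ρ : G →* GL₂(𝒪)`. -/
def residualRep {G : Type*} [Group G] {O : Type*} [CommRing O] [IsLocalRing O]
    (ρ : G →* GL (Fin 2) O) (g : G) : Matrix (Fin 2) (Fin 2) (ResidueField O) :=
  ((ρ g : Matrix (Fin 2) (Fin 2) O)).map (residue O)

/-- Absolute irreducibility of the residual representation, in the (equivalent)
Burnside form: the matrices `ρ̄(g)` span all of `M₂(𝕜)`. -/
def ResAbsIrred {G : Type*} [Group G] {O : Type*} [CommRing O] [IsLocalRing O]
    (ρ : G →* GL (Fin 2) O) : Prop :=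
  Submodule.span (ResidueField O) (Set.range (residualRep ρ)) = ⊤

/-- Setting: `𝒪` is the (local) coefficient ring of the `p`-ordinary
newform `f`, with fraction field `K`, maximal ideal `℘` and residue field `𝕜`;
`ρ : G_F →* GL₂(𝒪)` is `ρ_{f,℘}`, residually absolutely irreducible, and upper
triangular `[[ψ₁χ^(k-1), c],[0,ψ₂]]` on the decomposition group `Gp` with residually
distinct diagonal characters (`p`-ordinarity/(LC1)).  If `M ∈ GL₂(K)` conjugates `ρ`
to an integral representation `τ` which reduces to `ρ̄` and is upper triangular on
`Gp` with the same diagonal characters, then `M` is a scalar multiple of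
`[[u,v],[0,1]]` with `u ≡ 1`, `v ≡ 0 mod ℘`; consequently the extension class of `τ`
at `Gp` is `u` times that of `ρ` (up to a coboundary), and in particular `τ` is split
mod `℘ⁿ` if and only if `ρ` is. -/
theorem lattice_independence_of_splitting
    {G : Type*} [Group G] (Gp : Subgroup G)
    (O : Type*) [CommRing O] [IsLocalRing O] [IsDomain O]
    (ρ : G →* GL (Fin 2) O)
    (hirr : ResAbsIrred ρ)
    (hρtri : ∀ g ∈ Gp, (ρ g : Matrix (Fin 2) (Fin 2) O) 1 0 = 0)
    (hdist : ∃ g ∈ Gp, residue O ((ρ g : Matrix (Fin 2) (Fin 2) O) 0 0) ≠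
      residue O ((ρ g : Matrix (Fin 2) (Fin 2) O) 1 1))
    (M : GL (Fin 2) (FractionRing O))
    (τ : G → Matrix (Fin 2) (Fin 2) O)
    (hint : ∀ g, (τ g).map (algebraMap O (FractionRing O)) =
      (M : Matrix (Fin 2) (Fin 2) (FractionRing O)) *
        (ρ g : Matrix (Fin 2) (Fin 2) O).map (algebraMap O (FractionRing O)) *
        ((M⁻¹ : GL (Fin 2) (FractionRing O)) : Matrix (Fin 2) (Fin 2) (FractionRing O)))
    (hred : ∀ g, (τ g).map (residue O) = residualRep ρ g)
    (hτtri : ∀ g ∈ Gp, τ g 1 0 = 0 ∧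
      τ g 0 0 = (ρ g : Matrix (Fin 2) (Fin 2) O) 0 0 ∧
      τ g 1 1 = (ρ g : Matrix (Fin 2) (Fin 2) O) 1 1) :
    ∃ (lam : FractionRing O) (u v : O), lam ≠ 0 ∧
      u - 1 ∈ maximalIdeal O ∧ v ∈ maximalIdeal O ∧
      (∀ i j, (M : Matrix (Fin 2) (Fin 2) (FractionRing O)) i j =
        lam * algebraMap O (FractionRing O) ((!![u, v; 0, 1] : Matrix (Fin 2) (Fin 2) O) i j)) ∧
      (∀ g ∈ Gp, τ g 0 1 = u * (ρ g : Matrix (Fin 2) (Fin 2) O) 0 1 +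
        v * ((ρ g : Matrix (Fin 2) (Fin 2) O) 1 1 - (ρ g : Matrix (Fin 2) (Fin 2) O) 0 0)) ∧
      ∀ n : ℕ,
        ((∃ z : O, ∀ g ∈ Gp, τ g 0 1 + z * (τ g 1 1 - τ g 0 0) ∈ maximalIdeal O ^ n) ↔
          (∃ z : O, ∀ g ∈ Gp, (ρ g : Matrix (Fin 2) (Fin 2) O) 0 1 +
            z * ((ρ g : Matrix (Fin 2) (Fin 2) O) 1 1 -
              (ρ g : Matrix (Fin 2) (Fin 2) O) 0 0) ∈ maximalIdeal O ^ n)) := by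
  classical
  set K := FractionRing O with hK
  set alg := algebraMap O K with halgdef
  have halg : Function.Injective alg := IsFractionRing.injective O K
  have hUnit : ∀ a : O, residue O a ≠ 0 → IsUnit a := by
    intro a h
    by_contra hu
    exact h (Ideal.Quotient.eq_zero_iff_mem.mpr ((IsLocalRing.mem_maximalIdeal a).mpr hu))
  have hredEntry : ∀ g i j, residue O (τ g i j) = residue O ((ρ g : Matrix (Fin 2) (Fin 2) O) i j) := by
    intro g i j
    have := congrFun (congrFun (hred g) i) j
    simpa [Matrix.map_apply, residualRep] using this
  -- the matrix equation over K, without inverses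
  have hME : ∀ g i j,
      ∑ k, alg (τ g i k) * (M : Matrix (Fin 2) (Fin 2) K) k j =
      ∑ k, (M : Matrix (Fin 2) (Fin 2) K) i k * alg ((ρ g : Matrix (Fin 2) (Fin 2) O) k j) := by
    intro g i j
    have h1 : (τ g).map alg * (M : Matrix (Fin 2) (Fin 2) K) =
        (M : Matrix (Fin 2) (Fin 2) K) * ((ρ g : Matrix (Fin 2) (Fin 2) O)).map alg := by
      rw [hint g, Matrix.mul_assoc, Matrix.mul_assoc]
      congr 1
      rw [show ((M⁻¹ : GL (Fin 2) K) : Matrix (Fin 2) (Fin 2) K) *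
        (M : Matrix (Fin 2) (Fin 2) K) = 1 from Units.inv_mul M, Matrix.mul_one]
    have := congrFun (congrFun h1 i) j
    simpa [Matrix.mul_apply, Matrix.map_apply] using this
  set A := (M : Matrix (Fin 2) (Fin 2) K) 0 0 with hA
  set B := (M : Matrix (Fin 2) (Fin 2) K) 0 1 with hB
  set C := (M : Matrix (Fin 2) (Fin 2) K) 1 0 with hC
  set D := (M : Matrix (Fin 2) (Fin 2) K) 1 1 with hD
  -- Step A : C = 0
  obtain ⟨g0, hg0, hdg0⟩ := hdist
  have hC0 : C = 0 := by
    have e := hME g0 1 0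
    simp only [Fin.sum_univ_two] at e
    rw [(hτtri g0 hg0).1, (hτtri g0 hg0).2.2, hρtri g0 hg0] at e
    simp only [map_zero, zero_mul, mul_zero, zero_add, add_zero] at e
    have e2 : C * (alg ((ρ g0 : Matrix (Fin 2) (Fin 2) O) 0 0) -
        alg ((ρ g0 : Matrix (Fin 2) (Fin 2) O) 1 1)) = 0 := by
      linear_combination -e
    have hne : alg ((ρ g0 : Matrix (Fin 2) (Fin 2) O) 0 0) -
        alg ((ρ g0 : Matrix (Fin 2) (Fin 2) O) 1 1) ≠ 0 := by
      intro h
      exact hdg0 (by rw [halg (sub_eq_zero.mp h)])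
    rcases mul_eq_zero.mp e2 with h | h
    · exact h
    · exact absurd h hne
  -- Step B : find g1 with ρ(g1) 1 0 a unit
  have hg1 : ∃ g, residue O ((ρ g : Matrix (Fin 2) (Fin 2) O) 1 0) ≠ 0 := by
    by_contra hall
    push_neg at hall
    set kk := ResidueField O
    let φ : Matrix (Fin 2) (Fin 2) kk →ₗ[kk] kk :=
      { toFun := fun m => m 1 0
        map_add' := fun _ _ => rfl
        map_smul' := fun _ _ => rfl }
    have hle : Submodule.span kk (Set.range (residualRep ρ)) ≤ LinearMap.ker φ := by
      rw [Submodule.span_le]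
      rintro _ ⟨g, rfl⟩
      simp only [SetLike.mem_coe, LinearMap.mem_ker]
      exact (show φ (residualRep ρ g) = residue O ((ρ g : Matrix (Fin 2) (Fin 2) O) 1 0) from rfl).trans (hall g)
    rw [hirr] at hle
    have : φ (Matrix.single 1 0 (1 : kk)) = 0 := hle Submodule.mem_top
    simp [φ, Matrix.single] at this
    exact one_ne_zero (show (1 : kk) = 0 from this)
  obtain ⟨g1, hg1⟩ := hg1
  set r1 := (ρ g1 : Matrix (Fin 2) (Fin 2) O) 1 0 with hr1def
  set t1 := τ g1 1 0 with ht1def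
  have hres_t1 : residue O t1 = residue O r1 := hredEntry g1 1 0
  obtain ⟨ru, hru⟩ := hUnit r1 hg1
  obtain ⟨tu, htu⟩ := hUnit t1 (by rw [hres_t1]; exact hg1)
  have e10 : alg t1 * A = D * alg r1 := by
    have e := hME g1 1 0
    simp only [Fin.sum_univ_two] at e
    rw [← hA, ← hC, ← hD, hC0] at e
    simp only [mul_zero, zero_mul, add_zero, zero_add] at e
    exact e
  set u : O := r1 * ↑tu⁻¹ with hudef
  have hut1 : u * t1 = r1 := by
    rw [hudef, ← htu, mul_assoc, Units.inv_mul, mul_one]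
  have ht1ne : alg t1 ≠ 0 := by
    intro h
    exact (htu ▸ tu.ne_zero) (halg (h.trans (map_zero alg).symm))
  have h2u : alg u * alg t1 = alg r1 := by rw [← map_mul, hut1]
  have hAu : A = D * alg u := by
    refine mul_right_cancel₀ ht1ne ?_
    linear_combination e10 - D * h2u
  have hres_u : residue O u = 1 := by
    have h1 : residue O u * residue O t1 = residue O r1 := by rw [← map_mul, hut1]
    rw [← hres_t1] at h1
    have ht1r : residue O t1 ≠ 0 := by rw [hres_t1]; exact hg1
    exact mul_right_cancel₀ ht1r (h1.trans (one_mul _).symm)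
  have humem : u - 1 ∈ maximalIdeal O := by
    have h : residue O (u - 1) = 0 := by rw [map_sub, hres_u, map_one, sub_self]
    exact Ideal.Quotient.eq_zero_iff_mem.mp h
  set p1 := (ρ g1 : Matrix (Fin 2) (Fin 2) O) 0 0 with hp1def
  have e00 : alg (τ g1 0 0) * A = A * alg p1 + B * alg r1 := by
    have e := hME g1 0 0
    simp only [Fin.sum_univ_two] at e
    rw [← hA, ← hB, ← hC, hC0] at e
    simp only [mul_zero, zero_mul, add_zero, zero_add] at e
    exact e
  set v : O := u * (τ g1 0 0 - p1) * ↑ru⁻¹ with hvdef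
  have hr1ne : alg r1 ≠ 0 := by
    intro h
    exact (hru ▸ ru.ne_zero) (halg (h.trans (map_zero alg).symm))
  have hvr1 : v * r1 = u * (τ g1 0 0 - p1) := by
    rw [hvdef, ← hru, mul_assoc, Units.inv_mul, mul_one]
  have h2v : alg v * alg r1 = alg u * (alg (τ g1 0 0) - alg p1) := by
    rw [← map_mul, hvr1, map_mul, map_sub]
  have hBv : B = D * alg v := by
    have e00' : alg (τ g1 0 0) * (D * alg u) = D * alg u * alg p1 + B * alg r1 := by
      rw [← hAu]; exact e00
    refine mul_right_cancel₀ hr1ne ?_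
    linear_combination -e00' - D * h2v
  have hvmem : v ∈ maximalIdeal O := by
    have h1 : τ g1 0 0 - p1 ∈ maximalIdeal O := by
      have h : residue O (τ g1 0 0 - p1) = 0 := by
        rw [map_sub, hp1def, hredEntry g1 0 0, sub_self]
      exact Ideal.Quotient.eq_zero_iff_mem.mp h
    rw [hvdef]
    exact Ideal.mul_mem_right _ _ (Ideal.mul_mem_left _ _ h1)
  have hDne : D ≠ 0 := by
    intro h
    have hdet : IsUnit ((M : Matrix (Fin 2) (Fin 2) K).det) :=
      (Matrix.isUnit_iff_isUnit_det _).mp M.isUnit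
    rw [Matrix.det_fin_two] at hdet
    rw [← hA, ← hB, ← hC, ← hD, hC0, h] at hdet
    simp at hdet
  have hMentries : ∀ i j, (M : Matrix (Fin 2) (Fin 2) K) i j =
      D * alg ((!![u, v; 0, 1] : Matrix (Fin 2) (Fin 2) O) i j) := by
    intro i j
    fin_cases i <;> fin_cases j <;>
      simp [← hA, ← hB, ← hC, ← hD, hAu, hBv, hC0, Matrix.cons_val_zero,
        Matrix.cons_val_one, Matrix.head_cons]
  have hτ01 : ∀ g ∈ Gp, τ g 0 1 = u * (ρ g : Matrix (Fin 2) (Fin 2) O) 0 1 +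
      v * ((ρ g : Matrix (Fin 2) (Fin 2) O) 1 1 - (ρ g : Matrix (Fin 2) (Fin 2) O) 0 0) := by
    intro g hg
    have e := hME g 0 1
    simp only [Fin.sum_univ_two] at e
    rw [← hA, ← hB, ← hD, (hτtri g hg).2.1, hAu, hBv] at e
    apply halg
    refine mul_right_cancel₀ hDne (?_ :
      alg (τ g 0 1) * D = alg (u * (ρ g : Matrix (Fin 2) (Fin 2) O) 0 1 +
        v * ((ρ g : Matrix (Fin 2) (Fin 2) O) 1 1 -
          (ρ g : Matrix (Fin 2) (Fin 2) O) 0 0)) * D)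
    have halgval : alg (u * (ρ g : Matrix (Fin 2) (Fin 2) O) 0 1 +
        v * ((ρ g : Matrix (Fin 2) (Fin 2) O) 1 1 - (ρ g : Matrix (Fin 2) (Fin 2) O) 0 0)) =
        alg u * alg ((ρ g : Matrix (Fin 2) (Fin 2) O) 0 1) +
        alg v * (alg ((ρ g : Matrix (Fin 2) (Fin 2) O) 1 1) -
          alg ((ρ g : Matrix (Fin 2) (Fin 2) O) 0 0)) := by
      simp [map_add, map_mul, map_sub]
    linear_combination e - D * halgval
  obtain ⟨uu, huueq⟩ := hUnit u (by rw [hres_u]; exact one_ne_zero)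
  refine ⟨D, u, v, hDne, humem, hvmem, hMentries, hτ01, ?_⟩
  intro n
  constructor
  · rintro ⟨z, hz⟩
    refine ⟨↑uu⁻¹ * (v + z), fun g hg => ?_⟩
    have h1 := hz g hg
    rw [hτ01 g hg, (hτtri g hg).2.1, (hτtri g hg).2.2] at h1
    have hinv : (↑uu⁻¹ : O) * u = 1 := by rw [← huueq]; exact uu.inv_mul
    have key : (ρ g : Matrix (Fin 2) (Fin 2) O) 0 1 +
        (↑uu⁻¹ * (v + z)) * ((ρ g : Matrix (Fin 2) (Fin 2) O) 1 1 -
          (ρ g : Matrix (Fin 2) (Fin 2) O) 0 0) =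
        ↑uu⁻¹ * (u * (ρ g : Matrix (Fin 2) (Fin 2) O) 0 1 +
          v * ((ρ g : Matrix (Fin 2) (Fin 2) O) 1 1 - (ρ g : Matrix (Fin 2) (Fin 2) O) 0 0) +
          z * ((ρ g : Matrix (Fin 2) (Fin 2) O) 1 1 - (ρ g : Matrix (Fin 2) (Fin 2) O) 0 0)) := by
      linear_combination (-(ρ g : Matrix (Fin 2) (Fin 2) O) 0 1) * hinv
    rw [key]
    exact Ideal.mul_mem_left _ _ h1
  · rintro ⟨z, hz⟩
    refine ⟨u * z - v, fun g hg => ?_⟩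
    have h1 := hz g hg
    rw [hτ01 g hg, (hτtri g hg).2.1, (hτtri g hg).2.2]
    have key : u * (ρ g : Matrix (Fin 2) (Fin 2) O) 0 1 +
        v * ((ρ g : Matrix (Fin 2) (Fin 2) O) 1 1 - (ρ g : Matrix (Fin 2) (Fin 2) O) 0 0) +
        (u * z - v) * ((ρ g : Matrix (Fin 2) (Fin 2) O) 1 1 -
          (ρ g : Matrix (Fin 2) (Fin 2) O) 0 0) =
        u * ((ρ g : Matrix (Fin 2) (Fin 2) O) 0 1 +
          z * ((ρ g : Matrix (Fin 2) (Fin 2) O) 1 1 - (ρ g : Matrix (Fin 2) (Fin 2) O) 0 0)) := by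
      ring
    rw [key]
    exact Ideal.mul_mem_left _ _ h1

end
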